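/- Let 3 < p < ∞ and set r = 2p/(p−3), so that 3/p + 2/r = 1. Then there exists a constant C = C(p) such that for every continuously differentiable, compactly supported vector field v : ℝ³ → ℝ³ and every w ∈ L^p(ℝ³; ℝ³), one has ∫_{ℝ³} |∇v(x)|·|v(x)|·|w(x)| dx ≤ C·‖w‖_{L^p(ℝ³)}^r·‖v‖_{L²(ℝ³)}² + (1/2)·∫_{ℝ³} |∇v(x)|² dx. -/

import Mathlib

open MeasureTheory ENNReal NNReal

lemma lint_norm_rpow {α : Type*} [MeasurableSpace α] {μ : Measure α} {F : Type*}
    [NormedAddCommGroup F] (f : α → F) {q : ℝ} (hq : 0 < q) :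
    ∫⁻ x, (‖f x‖₊ : ℝ≥0∞) ^ q ∂μ = eLpNorm f (ENNReal.ofReal q) μ ^ q := by
  show ∫⁻ x, ‖f x‖ₑ ^ q ∂μ = _
  rw [eLpNorm_eq_lintegral_rpow_enorm_toReal (by simp [hq.not_ge]) ENNReal.ofReal_ne_top,
    ENNReal.toReal_ofReal hq.le, ← ENNReal.rpow_mul, one_div, inv_mul_cancel₀ hq.ne',
    ENNReal.rpow_one]

lemma integral_norm_sq_eq {α : Type*} [MeasurableSpace α] {μ : Measure α} {F : Type*}
    [NormedAddCommGroup F] (f : α → F) (hf : AEStronglyMeasurable f μ) :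
    ∫ x, ‖f x‖ ^ 2 ∂μ = (∫⁻ x, (‖f x‖₊ : ℝ≥0∞) ^ (2 : ℝ) ∂μ).toReal := by
  rw [integral_eq_lintegral_of_nonneg_ae (Filter.Eventually.of_forall fun x => by positivity)
    (by have h : AEStronglyMeasurable (fun x => ‖f x‖ * ‖f x‖) μ := hf.norm.mul hf.norm; simpa [pow_two] using h)]
  congr 1
  refine lintegral_congr fun x => ?_
  rw [← enorm_eq_nnnorm, ← ofReal_norm, ENNReal.ofReal_rpow_of_nonneg (norm_nonneg _) (by norm_num)]
  norm_num [Real.rpow_natCast]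

lemma halg_aux (c vv ww g p θ : ℝ) (hc : 0 ≤ c) (hv : 0 ≤ vv) (hw : 0 ≤ ww) (hg : 0 ≤ g)
    (hp : 3 < p) (hθ : θ = 3 / p) :
    g ^ (1/2:ℝ) * ((vv ^ ((p-3)/(p-2)) * ((c * g ^ (1/2:ℝ)) ^ (6:ℝ)) ^ (1/(p-2))) ^ ((p-2)/p) *
        (ww ^ p) ^ (2/p)) ^ (1/2:ℝ)
      = c ^ θ * ww * vv ^ ((1-θ)/2) * g ^ ((1+θ)/2) := by
  have hp0 : (0:ℝ) < p := by linarith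
  have hp2 : (0:ℝ) < p - 2 := by linarith
  have hp3 : (0:ℝ) < p - 3 := by linarith
  have hθ0 : 0 < θ := by rw [hθ]; positivity
  have hθ1 : θ < 1 := by rw [hθ, div_lt_one hp0]; linarith
  have hα : (0:ℝ) < (p-3)/(p-2) := div_pos hp3 hp2
  have hβ : (0:ℝ) < 1/(p-2) := by positivity
  have hγ : (0:ℝ) < (p-2)/p := div_pos hp2 hp0
  have hδ : (0:ℝ) < 2/p := by positivity
  rcases hg.eq_or_lt with rfl|hg
  · rw [Real.zero_rpow (by norm_num : (1/2:ℝ) ≠ 0),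
      Real.zero_rpow (ne_of_gt (by positivity : (0:ℝ) < (1+θ)/2))]
    ring
  rcases hc.eq_or_lt with rfl|hc
  · rw [Real.zero_rpow hθ0.ne', zero_mul,
      Real.zero_rpow (by positivity : (6:ℝ) ≠ 0), Real.zero_rpow hβ.ne', mul_zero,
      Real.zero_rpow hγ.ne', zero_mul, Real.zero_rpow (by norm_num : (1/2:ℝ) ≠ 0), mul_zero]
    ring
  rcases hv.eq_or_lt with rfl|hv
  · rw [Real.zero_rpow hα.ne', zero_mul, Real.zero_rpow hγ.ne', zero_mul,
      Real.zero_rpow (by norm_num : (1/2:ℝ) ≠ 0), mul_zero,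
      Real.zero_rpow (ne_of_gt (by linarith : (0:ℝ) < (1-θ)/2))]
    ring
  rcases hw.eq_or_lt with rfl|hw
  · rw [Real.zero_rpow hp0.ne', Real.zero_rpow hδ.ne', mul_zero,
      Real.zero_rpow (by norm_num : (1/2:ℝ) ≠ 0), mul_zero]
    ring
  -- all positive: compare logs
  have hL : 0 < g ^ (1/2:ℝ) * ((vv ^ ((p-3)/(p-2)) * ((c * g ^ (1/2:ℝ)) ^ (6:ℝ)) ^ (1/(p-2))) ^ ((p-2)/p) *
      (ww ^ p) ^ (2/p)) ^ (1/2:ℝ) := by positivity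
  have hR : 0 < c ^ θ * ww * vv ^ ((1-θ)/2) * g ^ ((1+θ)/2) := by positivity
  rw [← Real.exp_log hL, ← Real.exp_log hR]
  congr 1
  simp (disch := positivity) only [Real.log_mul, Real.log_rpow]
  rw [hθ]
  field_simp
  ring


set_option maxHeartbeats 2000000 in
theorem stmt11 (p r : ℝ) (hp : 3 < p) (hr : r = 2 * p / (p - 3)) :
    ∃ C : ℝ, 0 < C ∧
      ∀ v w : EuclideanSpace ℝ (Fin 3) → EuclideanSpace ℝ (Fin 3),
        ContDiff ℝ 1 v → HasCompactSupport v →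
        MemLp w (ENNReal.ofReal p) →
        (∫ x, ‖fderiv ℝ v x‖ * ‖v x‖ * ‖w x‖) ≤
          C * (eLpNorm w (ENNReal.ofReal p) volume).toReal ^ r *
              (∫ x, ‖v x‖ ^ 2) +
            (1 / 2) * ∫ x, ‖fderiv ℝ v x‖ ^ 2 := by
  have hp0 : (0:ℝ) < p := by linarith
  have hp2 : (0:ℝ) < p - 2 := by linarith
  have hp3 : (0:ℝ) < p - 3 := by linarith
  set θ : ℝ := 3 / p with hθdef
  have hθ0 : 0 < θ := by positivity
  have hθ1 : θ < 1 := by rw [hθdef, div_lt_one hp0]; linarith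
  set c₀ : ℝ≥0 :=
    eLpNormLESNormFDerivOfEqInnerConst (volume : Measure (EuclideanSpace ℝ (Fin 3))) 2 with hc₀
  set q : ℝ := 2 / (1 + θ) with hqdef
  set q' : ℝ := 2 / (1 - θ) with hq'def
  have hqpos : 0 < q := div_pos two_pos (by linarith)
  have hq'pos : 0 < q' := div_pos two_pos (by linarith)
  set ε : ℝ := (q / 2) ^ (1 / q) with hεdef
  have hεpos : 0 < ε := Real.rpow_pos_of_pos (by linarith) _
  set C : ℝ := ((c₀ : ℝ) ^ θ / ε) ^ q' / q' + 1 with hCdef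
  have hC0 : 0 < C := by
    have h1 : 0 ≤ ((c₀ : ℝ) ^ θ / ε) ^ q' / q' := by positivity
    rw [hCdef]; linarith
  refine ⟨C, hC0, ?_⟩
  intro v w hv h2v hw
  have hvc : Continuous v := hv.continuous
  have hgc : Continuous (fderiv ℝ v) := hv.continuous_fderiv one_ne_zero
  have h2g : HasCompactSupport (fderiv ℝ v) := HasCompactSupport.fderiv (𝕜 := ℝ) h2v
  set nv : EuclideanSpace ℝ (Fin 3) → ℝ≥0∞ := fun x => (‖v x‖₊ : ℝ≥0∞) with hnv
  set ng : EuclideanSpace ℝ (Fin 3) → ℝ≥0∞ := fun x => (‖fderiv ℝ v x‖₊ : ℝ≥0∞) with hng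
  set nw : EuclideanSpace ℝ (Fin 3) → ℝ≥0∞ := fun x => (‖w x‖₊ : ℝ≥0∞) with hnw
  have mnv : AEMeasurable nv volume := hvc.aestronglyMeasurable.enorm
  have mng : AEMeasurable ng volume := hgc.aestronglyMeasurable.enorm
  have mnw : AEMeasurable nw volume := hw.1.enorm
  set G : ℝ≥0∞ := ∫⁻ x, ng x ^ (2:ℝ) with hG
  set V : ℝ≥0∞ := ∫⁻ x, nv x ^ (2:ℝ) with hV
  set Z : ℝ≥0∞ := ∫⁻ x, nv x ^ (6:ℝ) with hZ
  set W : ℝ≥0∞ := eLpNorm w (ENNReal.ofReal p) volume with hW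
  -- eLpNorm identifications
  have hGe : G = eLpNorm (fderiv ℝ v) (ENNReal.ofReal 2) volume ^ (2:ℝ) :=
    lint_norm_rpow _ two_pos
  have hVe : V = eLpNorm v (ENNReal.ofReal 2) volume ^ (2:ℝ) := lint_norm_rpow _ two_pos
  have hWe : ∫⁻ x, nw x ^ p = W ^ p := lint_norm_rpow _ hp0
  -- finiteness
  have hWne : W ≠ ∞ := hw.2.ne
  have hGne : G ≠ ∞ := by
    rw [hGe]
    refine (ENNReal.rpow_lt_top_of_nonneg (by norm_num) ?_).ne
    rw [show ENNReal.ofReal 2 = (2:ℝ≥0∞) by norm_num]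
    exact (hgc.memLp_of_hasCompactSupport h2g).2.ne
  have hVne : V ≠ ∞ := by
    rw [hVe]
    refine (ENNReal.rpow_lt_top_of_nonneg (by norm_num) ?_).ne
    rw [show ENNReal.ofReal 2 = (2:ℝ≥0∞) by norm_num]
    exact (hvc.memLp_of_hasCompactSupport h2v).2.ne
  -- exponents
  have hα : (0:ℝ) ≤ (p-3)/(p-2) := by positivity
  have hβ : (0:ℝ) ≤ 1/(p-2) := by positivity
  have hγ : (0:ℝ) ≤ (p-2)/p := by positivity
  have hδ : (0:ℝ) ≤ 2/p := by positivity
  -- step 1 : Cauchy-Schwarz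
  have hs1 : (∫⁻ x, ng x * (nv x * nw x)) ≤
      G ^ (1/2:ℝ) * (∫⁻ x, (nv x * nw x) ^ (2:ℝ)) ^ (1/2:ℝ) := by
    have h := ENNReal.lintegral_mul_le_Lp_mul_Lq volume (p := 2) (q := 2)
      (Real.holderConjugate_iff.mpr ⟨one_lt_two, by norm_num⟩) mng (mnv.mul mnw)
    simpa only [Pi.mul_apply, ← hG] using h
  -- step 2 : Hölder with exponents (p/(p-2), p/2)
  have hs2 : (∫⁻ x, (nv x * nw x) ^ (2:ℝ)) ≤
      (∫⁻ x, nv x ^ (2*p/(p-2))) ^ ((p-2)/p) * (W ^ p) ^ (2/p) := by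
    have hconj : Real.HolderConjugate (p/(p-2)) (p/2) := by
      refine Real.holderConjugate_iff.mpr ⟨?_, ?_⟩
      · rw [lt_div_iff₀ hp2]; linarith
      · field_simp; ring
    have h := ENNReal.lintegral_mul_le_Lp_mul_Lq volume hconj
      (mnv.pow_const (2:ℝ)) (mnw.pow_const (2:ℝ))
    calc (∫⁻ x, (nv x * nw x) ^ (2:ℝ))
        = ∫⁻ x, (nv x ^ (2:ℝ)) * (nw x ^ (2:ℝ)) := by
          refine lintegral_congr fun x => ?_
          exact ENNReal.mul_rpow_of_nonneg _ _ (by norm_num)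
      _ ≤ (∫⁻ x, (nv x ^ (2:ℝ)) ^ (p/(p-2))) ^ (1/(p/(p-2))) *
          (∫⁻ x, (nw x ^ (2:ℝ)) ^ (p/2)) ^ (1/(p/2)) := by simpa using h
      _ = (∫⁻ x, nv x ^ (2*p/(p-2))) ^ ((p-2)/p) * (W ^ p) ^ (2/p) := by
          rw [one_div_div, one_div_div]
          congr 1
          · congr 1
            refine lintegral_congr fun x => ?_
            rw [← ENNReal.rpow_mul]
            congr 1
            field_simp
          · rw [← hWe]
            congr 1
            refine lintegral_congr fun x => ?_
            rw [← ENNReal.rpow_mul]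
            congr 1
            field_simp
  -- step 3 : interpolation Hölder with exponents ((p-2)/(p-3), p-2)
  have hs3 : (∫⁻ x, nv x ^ (2*p/(p-2))) ≤ V ^ ((p-3)/(p-2)) * Z ^ (1/(p-2)) := by
    have hconj : Real.HolderConjugate ((p-2)/(p-3)) (p-2) := by
      refine Real.holderConjugate_iff.mpr ⟨?_, ?_⟩
      · rw [lt_div_iff₀ hp3]; linarith
      · field_simp; ring
    have h := ENNReal.lintegral_mul_le_Lp_mul_Lq volume hconj
      (mnv.pow_const (2*((p-3)/(p-2)))) (mnv.pow_const (6/(p-2)))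
    calc (∫⁻ x, nv x ^ (2*p/(p-2)))
        = ∫⁻ x, (nv x ^ (2*((p-3)/(p-2)))) * (nv x ^ (6/(p-2))) := by
          refine lintegral_congr fun x => ?_
          rw [← ENNReal.rpow_add_of_nonneg _ _ (by positivity) (by positivity)]
          congr 1
          field_simp
          ring
      _ ≤ (∫⁻ x, (nv x ^ (2*((p-3)/(p-2)))) ^ ((p-2)/(p-3))) ^ (1/((p-2)/(p-3))) *
          (∫⁻ x, (nv x ^ (6/(p-2))) ^ (p-2)) ^ (1/(p-2)) := by simpa using h
      _ = V ^ ((p-3)/(p-2)) * Z ^ (1/(p-2)) := by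
          rw [one_div_div]
          congr 2
          · refine lintegral_congr fun x => ?_
            rw [← ENNReal.rpow_mul]
            congr 1
            field_simp
          · refine lintegral_congr fun x => ?_
            rw [← ENNReal.rpow_mul]
            congr 1
            field_simp
  -- step 4 : Sobolev inequality
  have hs4 : Z ≤ (((c₀:ℝ≥0∞)) * G ^ (1/2:ℝ)) ^ (6:ℝ) := by
    have hsob : eLpNorm v ((6:ℝ≥0):ℝ≥0∞) volume ≤
        (c₀:ℝ≥0∞) * eLpNorm (fderiv ℝ v) ((2:ℝ≥0):ℝ≥0∞) volume := by
      refine eLpNorm_le_eLpNorm_fderiv_of_eq_inner (p := 2) (p' := 6) volume hv h2v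
        (by norm_num) (by simp [finrank_euclideanSpace_fin]) ?_
      rw [finrank_euclideanSpace_fin]; norm_num
    have hZe : Z = eLpNorm v (ENNReal.ofReal 6) volume ^ (6:ℝ) := lint_norm_rpow _ (by norm_num)
    have hG12 : G ^ (1/2:ℝ) = eLpNorm (fderiv ℝ v) (ENNReal.ofReal 2) volume := by
      rw [hGe, ← ENNReal.rpow_mul]; norm_num
    rw [hZe, hG12]
    have e6 : ENNReal.ofReal 6 = ((6:ℝ≥0):ℝ≥0∞) := by norm_num
    have e2 : ENNReal.ofReal 2 = ((2:ℝ≥0):ℝ≥0∞) := by norm_num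
    rw [e6, e2]
    exact ENNReal.rpow_le_rpow hsob (by norm_num)
  -- combine into one ugly bound
  have key : (∫⁻ x, ng x * (nv x * nw x)) ≤
      G ^ (1/2:ℝ) * (((V ^ ((p-3)/(p-2)) *
        ((((c₀:ℝ≥0∞)) * G ^ (1/2:ℝ)) ^ (6:ℝ)) ^ (1/(p-2))) ^ ((p-2)/p)) *
        (W ^ p) ^ (2/p)) ^ (1/2:ℝ) := by
    refine hs1.trans ?_
    gcongr
    refine hs2.trans ?_
    gcongr
    exact hs3.trans (by gcongr)
  -- finiteness of the bound
  have hXne : (((c₀:ℝ≥0∞)) * G ^ (1/2:ℝ)) ^ (6:ℝ) ≠ ∞ :=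
    ENNReal.rpow_ne_top_of_nonneg (by norm_num)
      (ENNReal.mul_ne_top ENNReal.coe_ne_top (ENNReal.rpow_ne_top_of_nonneg (by norm_num) hGne))
  have hUne : G ^ (1/2:ℝ) * (((V ^ ((p-3)/(p-2)) *
      ((((c₀:ℝ≥0∞)) * G ^ (1/2:ℝ)) ^ (6:ℝ)) ^ (1/(p-2))) ^ ((p-2)/p)) *
      (W ^ p) ^ (2/p)) ^ (1/2:ℝ) ≠ ∞ := by
    refine ENNReal.mul_ne_top (ENNReal.rpow_ne_top_of_nonneg (by norm_num) hGne) ?_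
    refine ENNReal.rpow_ne_top_of_nonneg (by norm_num) (ENNReal.mul_ne_top ?_ ?_)
    · exact ENNReal.rpow_ne_top_of_nonneg hγ (ENNReal.mul_ne_top
        (ENNReal.rpow_ne_top_of_nonneg hα hVne) (ENNReal.rpow_ne_top_of_nonneg hβ hXne))
    · exact ENNReal.rpow_ne_top_of_nonneg hδ (ENNReal.rpow_ne_top_of_nonneg hp0.le hWne)
  -- identify the real integrals
  have hmsb : AEStronglyMeasurable
      (fun x : EuclideanSpace ℝ (Fin 3) => ‖fderiv ℝ v x‖ * ‖v x‖ * ‖w x‖) volume :=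
    (hgc.norm.aestronglyMeasurable.mul hvc.norm.aestronglyMeasurable).mul hw.1.norm
  have hLHS : (∫ x, ‖fderiv ℝ v x‖ * ‖v x‖ * ‖w x‖) = (∫⁻ x, ng x * (nv x * nw x)).toReal := by
    rw [integral_eq_lintegral_of_nonneg_ae
      (Filter.Eventually.of_forall fun x => by positivity) hmsb]
    congr 1
    refine lintegral_congr fun x => ?_
    rw [ENNReal.ofReal_mul (by positivity), ENNReal.ofReal_mul (norm_nonneg _),
      ofReal_norm, ofReal_norm, ofReal_norm, mul_assoc]
    rfl
  have hV2 : (∫ x, ‖v x‖ ^ 2) = V.toReal := integral_norm_sq_eq v hvc.aestronglyMeasurable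
  have hG2int : (∫ x, ‖fderiv ℝ v x‖ ^ 2) = G.toReal := integral_norm_sq_eq _ hgc.aestronglyMeasurable
  have hg0 : 0 ≤ G.toReal := ENNReal.toReal_nonneg
  have hv0 : 0 ≤ V.toReal := ENNReal.toReal_nonneg
  have hw0 : 0 ≤ W.toReal := ENNReal.toReal_nonneg
  set A : ℝ := (c₀:ℝ) ^ θ * W.toReal * V.toReal ^ ((1-θ)/2) with hA
  have hA0 : 0 ≤ A := by rw [hA]; positivity
  have hreal : (∫⁻ x, ng x * (nv x * nw x)).toReal ≤ A * G.toReal ^ ((1+θ)/2) := by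
    refine (ENNReal.toReal_mono hUne key).trans_eq ?_
    rw [hA, ← halg_aux (c₀:ℝ) V.toReal W.toReal G.toReal p θ (by positivity) hv0 hw0 hg0 hp hθdef]
    simp only [ENNReal.toReal_mul, ← ENNReal.toReal_rpow, ENNReal.coe_toReal]
  -- Young's inequality
  have h1θ : (0:ℝ) < 1 - θ := by linarith
  have hq'r : q' = r := by
    rw [hq'def, hr, div_eq_div_iff h1θ.ne' hp3.ne']
    rw [hθdef]
    field_simp
  have hconj : Real.HolderConjugate q' q := by
    refine Real.holderConjugate_iff.mpr ⟨?_, ?_⟩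
    · rw [hq'def, lt_div_iff₀ (by linarith)]; linarith
    · rw [hqdef, hq'def, inv_div, inv_div]
      ring
  have hY := Real.young_inequality_of_nonneg (a := A/ε) (b := ε * G.toReal ^ ((1+θ)/2))
      (div_nonneg hA0 hεpos.le)
      (mul_nonneg hεpos.le (Real.rpow_nonneg hg0 ((1+θ)/2))) hconj
  have e1 : (A/ε) * (ε * G.toReal ^ ((1+θ)/2)) = A * G.toReal ^ ((1+θ)/2) := by
    field_simp
  have e2 : (A/ε) ^ q' = ((c₀:ℝ) ^ θ/ε) ^ q' * (W.toReal ^ r * V.toReal) := by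
    rw [show A/ε = ((c₀:ℝ) ^ θ/ε) * W.toReal * V.toReal ^ ((1-θ)/2) by rw [hA]; ring]
    rw [Real.mul_rpow (by positivity) (Real.rpow_nonneg hv0 _),
      Real.mul_rpow (by positivity) hw0, ← Real.rpow_mul hv0,
      show ((1-θ)/2) * q' = 1 by rw [hq'def]; field_simp [h1θ.ne'],
      Real.rpow_one, hq'r, mul_assoc]
  have e3 : (ε * G.toReal ^ ((1+θ)/2)) ^ q = (q/2) * G.toReal := by
    rw [Real.mul_rpow hεpos.le (Real.rpow_nonneg hg0 _), ← Real.rpow_mul hg0,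
      show ((1+θ)/2) * q = 1 by
        rw [hqdef]; field_simp [show (1:ℝ)+θ ≠ 0 by positivity],
      Real.rpow_one, hεdef, ← Real.rpow_mul (by positivity),
      show (1/q) * q = 1 by field_simp [hqpos.ne'], Real.rpow_one]
  have hwr : 0 ≤ W.toReal ^ r * V.toReal := mul_nonneg (Real.rpow_nonneg hw0 _) hv0
  have hKC : ((c₀:ℝ) ^ θ/ε) ^ q' / q' ≤ C := by rw [hCdef]; linarith
  rw [hLHS, hV2, hG2int]
  calc (∫⁻ x, ng x * (nv x * nw x)).toReal
      ≤ A * G.toReal ^ ((1+θ)/2) := hreal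
    _ = (A/ε) * (ε * G.toReal ^ ((1+θ)/2)) := e1.symm
    _ ≤ (A/ε) ^ q' / q' + (ε * G.toReal ^ ((1+θ)/2)) ^ q / q := hY
    _ = (((c₀:ℝ) ^ θ/ε) ^ q' / q') * (W.toReal ^ r * V.toReal) + (1/2) * G.toReal := by
        rw [e2, e3]
        field_simp
    _ ≤ C * W.toReal ^ r * V.toReal + (1/2) * G.toReal := by
        have h := mul_le_mul_of_nonneg_right hKC hwr
        nlinarith [h]
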